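/- Suppose an a×a grid of ordered index pairs V = {(i,j) : i,j ∈ [a], i≠j} is covered by three overlapping index sets I₁ = V \ (A ∪ Z), I₂ = A ∪ B ∪ Z, I₃ = V \ B where A, B, Z ⊆ V, A ∩ Z = ∅, and |B ∩ (A ∪ Z)| ≤ |B \ (A ∪ Z)|. Then max(|I₁|, |I₂|, |I₃|) ≥ (3/5)·|V|. -/
import Mathlib


open Finset

/-- The off-diagonal grid of ordered index pairs. -/
def offDiag' (a : ℕ) : Finset (Fin a × Fin a) :=
  Finset.univ.filter (fun p : Fin a × Fin a => p.1 ≠ p.2)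

/-- Abstract form of the case-distinction claim: if `A, B, Z ⊆ V` (the off-diagonal
grid) with `A ∩ Z = ∅` and `|B ∩ (A ∪ Z)| ≤ |B \ (A ∪ Z)|`, then one of the three
sets `V \ (A ∪ Z)`, `A ∪ B ∪ Z`, `V \ B` has size at least `(3/5)·|V|`. -/
theorem three_cases (a : ℕ) (A B Z : Finset (Fin a × Fin a))
    (hA : A ⊆ offDiag' a) (hB : B ⊆ offDiag' a) (hZ : Z ⊆ offDiag' a)
    (hAZ : Disjoint A Z)
    (hBsplit : (B ∩ (A ∪ Z)).card ≤ (B \ (A ∪ Z)).card) :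
    (3 : ℚ) / 5 * ((offDiag' a).card : ℚ) ≤
      max (max (((offDiag' a \ (A ∪ Z)).card : ℚ)) (((A ∪ B ∪ Z).card : ℚ)))
        (((offDiag' a \ B).card : ℚ)) := by
  set V := offDiag' a with hV
  have hu : A ∪ Z ⊆ V := union_subset hA hZ
  have h1 : (V \ (A ∪ Z)).card = V.card - (A ∪ Z).card := card_sdiff_of_subset hu
  have h3 : (V \ B).card = V.card - B.card := card_sdiff_of_subset hB
  have h2 : (A ∪ B ∪ Z).card = (A ∪ Z).card + (B \ (A ∪ Z)).card := by
    have he : A ∪ B ∪ Z = (A ∪ Z) ∪ (B \ (A ∪ Z)) := by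
      ext x; simp only [mem_union, mem_sdiff]; tauto
    rw [he, card_union_of_disjoint disjoint_sdiff]
  have hBcard : (B ∩ (A ∪ Z)).card + (B \ (A ∪ Z)).card = B.card :=
    card_inter_add_card_sdiff B (A ∪ Z)
  have hle1 : (A ∪ Z).card ≤ V.card := card_le_card hu
  have hle2 : B.card ≤ V.card := card_le_card hB
  have key : 3 * V.card ≤
      2 * (V \ (A ∪ Z)).card + 2 * (A ∪ B ∪ Z).card + (V \ B).card := by
    omega
  have m1 : ((V \ (A ∪ Z)).card : ℚ) ≤
      max (max (((V \ (A ∪ Z)).card : ℚ)) (((A ∪ B ∪ Z).card : ℚ)))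
        (((V \ B).card : ℚ)) := le_max_of_le_left (le_max_left _ _)
  have m2 : ((A ∪ B ∪ Z).card : ℚ) ≤
      max (max (((V \ (A ∪ Z)).card : ℚ)) (((A ∪ B ∪ Z).card : ℚ)))
        (((V \ B).card : ℚ)) := le_max_of_le_left (le_max_right _ _)
  have m3 : ((V \ B).card : ℚ) ≤
      max (max (((V \ (A ∪ Z)).card : ℚ)) (((A ∪ B ∪ Z).card : ℚ)))
        (((V \ B).card : ℚ)) := le_max_right _ _
  have key' : (3 : ℚ) * V.card ≤
      2 * (V \ (A ∪ Z)).card + 2 * (A ∪ B ∪ Z).card + (V \ B).card := by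
    exact_mod_cast key
  rw [div_mul_eq_mul_div, div_le_iff₀ (by norm_num)]
  linarith
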